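/- Let P be a k-by-n binary matrix, θ = π/8, s ∈ F_2^n, X the output variable of the constant-action X-program (P, π/8), and Y the classical random variable defined by Y = Σ_{p: p·dᵀ=1, p·eᵀ=1} p for independent uniform d, e ∈ F_2^n. If P(X·sᵀ = 0) = 1 then P(Y·sᵀ = 0) = 1. -/

import Mathlib

/-- Hamming weight of a binary vector: number of coordinates equal to 1. -/
def wt {ι : Type*} [Fintype ι] (a : ι → ZMod 2) : ℕ :=
  (Finset.univ.filter fun i => a i = 1).card

/-- Output distribution of the constant-action X-program given by the k-by-n binary
matrix `P` with action `θ`: `P(X = x)`. -/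
noncomputable def XProb {k n : ℕ} (P : Matrix (Fin k) (Fin n) (ZMod 2)) (θ : ℝ)
    (x : Fin n → ZMod 2) : ℝ :=
  ‖∑ a ∈ Finset.univ.filter (fun a : Fin k → ZMod 2 => Matrix.vecMul a P = x),
    (Real.cos θ : ℂ) ^ (k - wt a) * (Complex.I * Real.sin θ) ^ (wt a)‖ ^ 2

/-- The bias of the X-program output distribution in direction `s`:
`P(X ⬝ sᵀ = 0)`, the probability that the output is orthogonal to `s` over `F₂`. -/
noncomputable def bias {k n : ℕ} (P : Matrix (Fin k) (Fin n) (ZMod 2)) (θ : ℝ)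
    (s : Fin n → ZMod 2) : ℝ :=
  ∑ x ∈ Finset.univ.filter (fun x : Fin n → ZMod 2 => dotProduct x s = 0), XProb P θ x

lemma zmod2_cases (z : ZMod 2) : z = 0 ∨ z = 1 := by revert z; decide

open Finset Matrix Complex

noncomputable def chi (z : ZMod 2) : ℂ := if z = 0 then 1 else -1

lemma chi_zero : chi 0 = 1 := by simp [chi]

lemma chi_add (a b : ZMod 2) : chi (a + b) = chi a * chi b := by
  have h2 : (1:ZMod 2) + 1 = 0 := rfl
  rcases zmod2_cases a with rfl | rfl <;> rcases zmod2_cases b with rfl | rfl <;> simp [chi, h2]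

lemma chi_conj (a : ZMod 2) : (starRingEnd ℂ) (chi a) = chi a := by
  rcases zmod2_cases a with rfl | rfl <;> simp [chi]

lemma chi_sum {ι : Type*} (s : Finset ι) (f : ι → ZMod 2) :
    chi (∑ i ∈ s, f i) = ∏ i ∈ s, chi (f i) := by
  classical
  induction s using Finset.induction_on with
  | empty => simp [chi]
  | insert _ _ h ih => rw [Finset.sum_insert h, Finset.prod_insert h, chi_add, ih]

lemma sum_chi_single (c : ZMod 2) : ∑ b : ZMod 2, chi (b * c) = if c = 0 then 2 else 0 := by
  have huniv : (Finset.univ : Finset (ZMod 2)) = {0, 1} := by decide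
  rw [huniv]
  rcases zmod2_cases c with rfl | rfl <;> simp [chi]

lemma sum_chi {m : ℕ} (u : Fin m → ZMod 2) :
    ∑ x : Fin m → ZMod 2, chi (x ⬝ᵥ u) = if u = 0 then (2:ℂ)^m else 0 := by
  have h1 : ∀ x : Fin m → ZMod 2, chi (x ⬝ᵥ u) = ∏ i, chi (x i * u i) := fun x =>
    chi_sum _ _
  simp_rw [h1]
  rw [← Fintype.prod_sum (fun i b => chi (b * u i))]
  simp_rw [sum_chi_single]
  by_cases h : u = 0
  · simp [h]
  · rw [if_neg h]
    obtain ⟨i, hi⟩ : ∃ i, u i ≠ 0 := by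
      by_contra hc; push_neg at hc; exact h (funext hc)
    exact Finset.prod_eq_zero (Finset.mem_univ i) (by simp [hi])

noncomputable def gg (θ : ℝ) (b : ZMod 2) : ℂ :=
  if b = 0 then (Real.cos θ : ℂ) else Complex.I * Real.sin θ

lemma wt_le {m : ℕ} (a : Fin m → ZMod 2) : wt a ≤ m := by
  have := Finset.card_filter_le (Finset.univ : Finset (Fin m)) (fun i => a i = 1)
  simpa [wt] using this

lemma T_prod {m : ℕ} (θ : ℝ) (a : Fin m → ZMod 2) :
    (Real.cos θ : ℂ) ^ (m - wt a) * (Complex.I * Real.sin θ) ^ (wt a)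
      = ∏ i, gg θ (a i) := by
  classical
  rw [← Finset.prod_filter_mul_prod_filter_not Finset.univ (fun i => a i = 1) (fun i => gg θ (a i))]
  have h1 : ∀ i ∈ Finset.univ.filter (fun i => a i = 1), gg θ (a i) = Complex.I * Real.sin θ := by
    intro i hi; simp only [Finset.mem_filter] at hi
    simp [gg, hi.2]
  have h2 : ∀ i ∈ Finset.univ.filter (fun i => ¬ a i = 1), gg θ (a i) = (Real.cos θ : ℂ) := by
    intro i hi; simp only [Finset.mem_filter] at hi
    have : a i = 0 := (zmod2_cases (a i)).resolve_right hi.2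
    simp [gg, this]
  rw [Finset.prod_congr rfl h1, Finset.prod_congr rfl h2, Finset.prod_const, Finset.prod_const]
  have hcard : (Finset.univ.filter (fun i => ¬ a i = 1)).card = m - wt a := by
    have := Finset.card_filter_add_card_filter_not (s := (Finset.univ : Finset (Fin m)))
      (p := fun i => a i = 1)
    have hwt : (Finset.univ.filter (fun i => a i = 1)).card = wt a := rfl
    simp only [Finset.card_univ, Fintype.card_fin] at this
    omega
  rw [hcard, mul_comm]
  rfl

lemma ampl {m : ℕ} (θ : ℝ) (u : Fin m → ZMod 2) :
    ∑ a : Fin m → ZMod 2,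
      ((Real.cos θ : ℂ) ^ (m - wt a) * (Complex.I * Real.sin θ) ^ (wt a)) * chi (a ⬝ᵥ u)
      = Complex.exp ((((m:ℤ) - 2 * (wt u : ℤ)) * θ) * Complex.I) := by
  classical
  have key : ∀ a : Fin m → ZMod 2,
      ((Real.cos θ : ℂ) ^ (m - wt a) * (Complex.I * Real.sin θ) ^ (wt a)) * chi (a ⬝ᵥ u)
        = ∏ i, (gg θ (a i) * chi (a i * u i)) := by
    intro a
    rw [T_prod θ a, dotProduct, chi_sum, ← Finset.prod_mul_distrib]
  simp_rw [key]
  rw [← Fintype.prod_sum (fun i b => gg θ b * chi (b * u i))]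
  have hfac : ∀ i, (∑ b : ZMod 2, gg θ b * chi (b * u i))
      = Complex.exp ((if u i = 1 then (-(θ:ℂ)) else (θ:ℂ)) * Complex.I) := by
    intro i
    have huniv : (Finset.univ : Finset (ZMod 2)) = {0, 1} := by decide
    rw [huniv]
    rcases zmod2_cases (u i) with h | h
    · rw [h, if_neg (by decide : ¬ (0:ZMod 2) = 1), Complex.exp_mul_I,
        ← Complex.ofReal_cos, ← Complex.ofReal_sin]
      simp [gg, chi]
      ring
    · rw [h, if_pos rfl, Complex.exp_mul_I, Complex.cos_neg, Complex.sin_neg,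
        ← Complex.ofReal_cos, ← Complex.ofReal_sin]
      simp [gg, chi]
      ring
  simp_rw [hfac]
  rw [← Finset.prod_filter_mul_prod_filter_not Finset.univ (fun i => u i = 1)]
  have e1 : ∏ i ∈ Finset.univ.filter (fun i => u i = 1),
      Complex.exp ((if u i = 1 then (-(θ:ℂ)) else (θ:ℂ)) * Complex.I)
      = Complex.exp ((-(θ:ℂ)) * Complex.I) ^ (wt u) := by
    rw [show wt u = (Finset.univ.filter (fun i => u i = 1)).card from rfl]
    exact Finset.prod_eq_pow_card (fun i hi => by
      simp only [Finset.mem_filter] at hi; rw [if_pos hi.2])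
  have e2 : ∏ i ∈ Finset.univ.filter (fun i => ¬ u i = 1),
      Complex.exp ((if u i = 1 then (-(θ:ℂ)) else (θ:ℂ)) * Complex.I)
      = Complex.exp ((θ:ℂ) * Complex.I) ^ (m - wt u) := by
    have hcard : (Finset.univ.filter (fun i => ¬ u i = 1)).card = m - wt u := by
      have := Finset.card_filter_add_card_filter_not
        (s := (Finset.univ : Finset (Fin m))) (p := fun i => u i = 1)
      have hwt : (Finset.univ.filter (fun i => u i = 1)).card = wt u := rfl
      simp only [Finset.card_univ, Fintype.card_fin] at this
      omega
    rw [← hcard]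
    exact Finset.prod_eq_pow_card (fun i hi => by
      simp only [Finset.mem_filter] at hi; rw [if_neg hi.2])
  rw [e1, e2, ← Complex.exp_nat_mul, ← Complex.exp_nat_mul, ← Complex.exp_add]
  congr 1
  have hle := wt_le u
  push_cast [Nat.cast_sub hle]
  ring

lemma ampl_conj {m : ℕ} (θ : ℝ) (u : Fin m → ZMod 2) :
    ∑ b : Fin m → ZMod 2,
      (starRingEnd ℂ) ((Real.cos θ : ℂ) ^ (m - wt b) * (Complex.I * Real.sin θ) ^ (wt b))
        * chi (b ⬝ᵥ u)
      = Complex.exp (-((((m:ℤ) - 2 * (wt u : ℤ)) * θ) * Complex.I)) := by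
  have h1 : ∀ b : Fin m → ZMod 2,
      (starRingEnd ℂ) (((Real.cos θ : ℂ) ^ (m - wt b) * (Complex.I * Real.sin θ) ^ (wt b)) * chi (b ⬝ᵥ u))
        = (starRingEnd ℂ) ((Real.cos θ : ℂ) ^ (m - wt b) * (Complex.I * Real.sin θ) ^ (wt b)) * chi (b ⬝ᵥ u) := by
    intro b; rw [_root_.map_mul, chi_conj]
  simp_rw [← h1]
  rw [← map_sum, ampl θ u, ← Complex.exp_conj]
  congr 1
  simp only [_root_.map_mul, _root_.map_sub, Complex.conj_I, Complex.conj_ofReal,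
    map_natCast, map_intCast, map_ofNat]
  ring

lemma bias_formula {k n : ℕ} (P : Matrix (Fin k) (Fin n) (ZMod 2)) (θ : ℝ) (s : Fin n → ZMod 2) :
    (bias P θ s : ℂ) * 2 ^ n * 2
      = (2:ℂ)^n + ∑ y : Fin n → ZMod 2,
          Complex.exp ((((2 * (wt (P *ᵥ y) : ℝ) - 2 * (wt (P *ᵥ (y + s)) : ℝ)) * θ : ℝ) : ℂ)
            * Complex.I) := by
  classical
  set T : (Fin k → ZMod 2) → ℂ := fun a =>
    (Real.cos θ : ℂ) ^ (k - wt a) * (Complex.I * Real.sin θ) ^ (wt a) with hT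
  set F : (Fin n → ZMod 2) → ℂ := fun x =>
    ∑ a ∈ Finset.univ.filter (fun a : Fin k → ZMod 2 => Matrix.vecMul a P = x), T a with hF
  have hself : ∀ u : Fin n → ZMod 2, u + u = 0 := fun u =>
    funext fun i => CharTwo.add_self_eq_zero _
  have hXP : ∀ x, ((XProb P θ x : ℝ) : ℂ) = F x * (starRingEnd ℂ) (F x) := by
    intro x
    rw [XProb, Complex.sq_norm, ← Complex.mul_conj]
  -- step 1
  have step1 : (bias P θ s : ℂ) * 2
      = ∑ x : Fin n → ZMod 2, (1 + chi (x ⬝ᵥ s)) * (F x * (starRingEnd ℂ) (F x)) := by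
    have hb : (bias P θ s : ℂ)
        = ∑ x ∈ Finset.univ.filter (fun x : Fin n → ZMod 2 => x ⬝ᵥ s = 0),
            F x * (starRingEnd ℂ) (F x) := by
      rw [bias, Complex.ofReal_sum]
      exact Finset.sum_congr rfl fun x _ => hXP x
    rw [hb, Finset.sum_mul, Finset.sum_filter]
    refine Finset.sum_congr rfl fun x _ => ?_
    rcases zmod2_cases (x ⬝ᵥ s) with h | h
    · rw [if_pos h, h, chi_zero]; ring
    · rw [if_neg (by rw [h]; decide), h]
      have : chi 1 = -1 := by simp [chi]
      rw [this]; ring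
  -- step 2
  have hFind : ∀ x, F x = ∑ a : Fin k → ZMod 2, (if Matrix.vecMul a P = x then T a else 0) :=
    fun x => Finset.sum_filter _ _
  have hFconj : ∀ x, (starRingEnd ℂ) (F x)
      = ∑ b : Fin k → ZMod 2, (if Matrix.vecMul b P = x then (starRingEnd ℂ) (T b) else 0) := by
    intro x
    rw [hFind, map_sum]
    exact Finset.sum_congr rfl fun b _ => by rw [apply_ite (starRingEnd ℂ), map_zero]
  have step2 : ∑ x : Fin n → ZMod 2, (1 + chi (x ⬝ᵥ s)) * (F x * (starRingEnd ℂ) (F x))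
      = ∑ a : Fin k → ZMod 2, ∑ b : Fin k → ZMod 2,
          (if Matrix.vecMul b P = Matrix.vecMul a P then
            T a * (starRingEnd ℂ) (T b) * (1 + chi (Matrix.vecMul a P ⬝ᵥ s)) else 0) := by
    have h1 : ∀ x : Fin n → ZMod 2, (1 + chi (x ⬝ᵥ s)) * (F x * (starRingEnd ℂ) (F x))
        = ∑ a : Fin k → ZMod 2, ∑ b : Fin k → ZMod 2,
            (if Matrix.vecMul a P = x then
              T a * (if Matrix.vecMul b P = x then (starRingEnd ℂ) (T b) else 0)
                * (1 + chi (x ⬝ᵥ s)) else 0) := by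
      intro x
      rw [hFconj, hFind, Finset.sum_mul_sum, Finset.mul_sum]
      refine Finset.sum_congr rfl fun a _ => ?_
      rw [Finset.mul_sum]
      refine Finset.sum_congr rfl fun b _ => ?_
      split_ifs <;> ring
    simp_rw [h1]
    rw [Finset.sum_comm]
    refine Finset.sum_congr rfl fun a _ => ?_
    rw [Finset.sum_comm]
    refine Finset.sum_congr rfl fun b _ => ?_
    rw [Finset.sum_ite_eq Finset.univ (Matrix.vecMul a P)]
    simp only [Finset.mem_univ, if_true]
    split_ifs <;> ring
  -- step 3
  have key3 : ∀ a b : Fin k → ZMod 2,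
      (2:ℂ)^n * (if Matrix.vecMul b P = Matrix.vecMul a P then
          T a * (starRingEnd ℂ) (T b) * (1 + chi (Matrix.vecMul a P ⬝ᵥ s)) else 0)
      = ∑ y : Fin n → ZMod 2,
          ((T a * chi (a ⬝ᵥ (P *ᵥ y))) * ((starRingEnd ℂ) (T b) * chi (b ⬝ᵥ (P *ᵥ y)))
            + (T a * chi (a ⬝ᵥ (P *ᵥ (y + s)))) * ((starRingEnd ℂ) (T b) * chi (b ⬝ᵥ (P *ᵥ y)))) := by
    intro a b
    have hterm : ∀ y : Fin n → ZMod 2,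
        chi (y ⬝ᵥ (Matrix.vecMul a P + Matrix.vecMul b P))
            * (T a * (starRingEnd ℂ) (T b) * (1 + chi (Matrix.vecMul a P ⬝ᵥ s)))
          = (T a * chi (a ⬝ᵥ (P *ᵥ y))) * ((starRingEnd ℂ) (T b) * chi (b ⬝ᵥ (P *ᵥ y)))
            + (T a * chi (a ⬝ᵥ (P *ᵥ (y + s)))) * ((starRingEnd ℂ) (T b) * chi (b ⬝ᵥ (P *ᵥ y))) := by
      intro y
      have e1 : chi (y ⬝ᵥ (Matrix.vecMul a P + Matrix.vecMul b P))
          = chi (a ⬝ᵥ (P *ᵥ y)) * chi (b ⬝ᵥ (P *ᵥ y)) := by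
        rw [dotProduct_add, chi_add, dotProduct_comm y,
          dotProduct_comm y, Matrix.dotProduct_mulVec, Matrix.dotProduct_mulVec]
      have e2 : chi (a ⬝ᵥ (P *ᵥ (y + s)))
          = chi (a ⬝ᵥ (P *ᵥ y)) * chi (Matrix.vecMul a P ⬝ᵥ s) := by
        rw [Matrix.mulVec_add, dotProduct_add, chi_add,
          Matrix.dotProduct_mulVec a P s]
      rw [e1, e2]; ring
    rw [Finset.sum_congr rfl fun y _ => (hterm y).symm, ← Finset.sum_mul, sum_chi]
    have hiff : (Matrix.vecMul a P + Matrix.vecMul b P = 0)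
        ↔ (Matrix.vecMul b P = Matrix.vecMul a P) := by
      constructor
      · intro h
        have h2 : Matrix.vecMul b P
            = Matrix.vecMul a P + (Matrix.vecMul a P + Matrix.vecMul b P) := by
          rw [← add_assoc, hself, zero_add]
        rw [h, add_zero] at h2
        exact h2
      · intro h; rw [h, hself]
    split_ifs with h1 h2 h2
    · ring
    · exact absurd (hiff.mpr h1) h2
    · exact absurd (hiff.mp h2) h1
    · ring
  -- combine
  have main : (bias P θ s : ℂ) * 2 ^ n * 2 = (2:ℂ)^n * ((bias P θ s : ℂ) * 2) := by ring
  rw [main, step1, step2, Finset.mul_sum]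
  simp_rw [Finset.mul_sum, key3]
  rw [Finset.sum_congr rfl fun a _ => Finset.sum_comm, Finset.sum_comm]
  have per_y : ∀ y : Fin n → ZMod 2,
      (∑ a : Fin k → ZMod 2, ∑ b : Fin k → ZMod 2,
          ((T a * chi (a ⬝ᵥ (P *ᵥ y))) * ((starRingEnd ℂ) (T b) * chi (b ⬝ᵥ (P *ᵥ y)))
            + (T a * chi (a ⬝ᵥ (P *ᵥ (y + s)))) * ((starRingEnd ℂ) (T b) * chi (b ⬝ᵥ (P *ᵥ y)))))
      = 1 + Complex.exp ((((2 * (wt (P *ᵥ y) : ℝ) - 2 * (wt (P *ᵥ (y + s)) : ℝ)) * θ : ℝ) : ℂ)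
        * Complex.I) := by
    intro y
    have split : ∀ a : Fin k → ZMod 2, ∑ b : Fin k → ZMod 2,
        ((T a * chi (a ⬝ᵥ (P *ᵥ y))) * ((starRingEnd ℂ) (T b) * chi (b ⬝ᵥ (P *ᵥ y)))
          + (T a * chi (a ⬝ᵥ (P *ᵥ (y + s)))) * ((starRingEnd ℂ) (T b) * chi (b ⬝ᵥ (P *ᵥ y))))
        = (∑ b : Fin k → ZMod 2, (T a * chi (a ⬝ᵥ (P *ᵥ y))) * ((starRingEnd ℂ) (T b) * chi (b ⬝ᵥ (P *ᵥ y))))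
          + ∑ b : Fin k → ZMod 2, (T a * chi (a ⬝ᵥ (P *ᵥ (y + s)))) * ((starRingEnd ℂ) (T b) * chi (b ⬝ᵥ (P *ᵥ y))) :=
      fun a => Finset.sum_add_distrib
    simp_rw [split]
    rw [Finset.sum_add_distrib, ← Finset.sum_mul_sum, ← Finset.sum_mul_sum]
    simp only [hT]
    rw [ampl θ (P *ᵥ y), ampl θ (P *ᵥ (y + s)), ampl_conj θ (P *ᵥ y), ← Complex.exp_add,
      ← Complex.exp_add]
    congr 1
    · rw [add_neg_cancel, Complex.exp_zero]
    · congr 1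
      push_cast
      ring
  rw [Finset.sum_congr rfl fun y _ => per_y y, Finset.sum_add_distrib, Finset.sum_const,
    Finset.card_univ]
  congr 1
  have : Fintype.card (Fin n → ZMod 2) = 2 ^ n := by
    rw [Fintype.card_fun]
    simp
  rw [this]
  simp

lemma sum_exp_eq_card {α : Type*} [Fintype α] (r : α → ℝ)
    (h : ∑ y : α, Complex.exp ((r y : ℝ) * Complex.I) = (Fintype.card α : ℂ)) (y : α) :
    Complex.exp ((r y : ℝ) * Complex.I) = 1 := by
  classical
  have habs : ∀ z : α, ‖Complex.exp ((r z : ℝ) * Complex.I)‖ = 1 := fun z =>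
    Complex.norm_exp_ofReal_mul_I (r z)
  have hre : ∀ z ∈ Finset.univ, (Complex.exp ((r z : ℝ) * Complex.I)).re ≤ (fun _ : α => (1:ℝ)) z := by
    intro z _
    exact le_trans (Complex.re_le_norm _) (le_of_eq (habs z))
  have hsumre : ∑ z : α, (Complex.exp ((r z : ℝ) * Complex.I)).re = ∑ _z : α, (1:ℝ) := by
    rw [← Complex.re_sum, h]
    simp
  have heq := (Finset.sum_eq_sum_iff_of_le hre).mp hsumre y (Finset.mem_univ y)
  have hns : Complex.normSq (Complex.exp ((r y : ℝ) * Complex.I)) = 1 := by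
    rw [← Complex.sq_norm, habs y]; norm_num
  rw [Complex.normSq_apply, heq] at hns
  have him : (Complex.exp ((r y : ℝ) * Complex.I)).im = 0 := by nlinarith
  apply Complex.ext <;> simp [heq, him]

lemma exp_real_mul_I_eq_one {r : ℝ} (h : Complex.exp ((r : ℝ) * Complex.I) = 1) :
    ∃ j : ℤ, r = j * (2 * Real.pi) := by
  rw [Complex.exp_eq_one_iff] at h
  obtain ⟨j, hj⟩ := h
  refine ⟨j, ?_⟩
  have h2 : ((r : ℂ)) * Complex.I = (((j : ℝ) * (2 * Real.pi) : ℝ) : ℂ) * Complex.I := by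
    rw [hj]; push_cast; ring
  have h3 := mul_right_cancel₀ Complex.I_ne_zero h2
  exact_mod_cast h3

lemma zmod2_val_add (a b : ZMod 2) :
    (((a + b).val : ℤ)) = (a.val : ℤ) + (b.val : ℤ) - 2 * ((a.val : ℤ) * (b.val : ℤ)) := by
  fin_cases a <;> fin_cases b <;> rfl

lemma wt_eq_sum_val {m : ℕ} (a : Fin m → ZMod 2) : (wt a : ℤ) = ∑ i, ((a i).val : ℤ) := by
  rw [wt, Finset.card_filter, Nat.cast_sum]
  refine Finset.sum_congr rfl fun i _ => ?_
  rcases zmod2_cases (a i) with h | h <;> rw [h] <;> rfl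

theorem quantum_bias_one_implies_classical_bias_one {k n : ℕ}
    (P : Matrix (Fin k) (Fin n) (ZMod 2)) (s : Fin n → ZMod 2)
    (h : bias P (Real.pi / 8) s = 1) :
    ((Finset.univ.filter (fun de : (Fin n → ZMod 2) × (Fin n → ZMod 2) =>
        dotProduct
          (∑ i ∈ Finset.univ.filter (fun i : Fin k =>
              dotProduct (P i) de.1 = 1 ∧ dotProduct (P i) de.2 = 1), P i)
          s = 0)).card : ℝ) / ((2 : ℝ) ^ n) ^ 2 = 1 := by
  classical
  have hcard : Fintype.card (Fin n → ZMod 2) = 2 ^ n := by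
    rw [Fintype.card_fun]; simp
  -- Step A : the sum of phases equals 2^n
  have hformula := bias_formula P (Real.pi / 8) s
  rw [h] at hformula
  have hsum : ∑ y : Fin n → ZMod 2,
      Complex.exp ((((2 * (wt (P *ᵥ y) : ℝ) - 2 * (wt (P *ᵥ (y + s)) : ℝ)) * (Real.pi / 8) : ℝ) : ℂ)
        * Complex.I) = ((Fintype.card (Fin n → ZMod 2) : ℕ) : ℂ) := by
    rw [hcard]
    push_cast at hformula ⊢
    linear_combination (-1 : ℂ) * hformula
  -- Step B : each phase is trivial, giving divisibility by 8
  have hdvd : ∀ y : Fin n → ZMod 2, (8:ℤ) ∣ ((wt (P *ᵥ y) : ℤ) - (wt (P *ᵥ (y + s)) : ℤ)) := by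
    intro y
    have h1 := sum_exp_eq_card
      (fun y => (2 * (wt (P *ᵥ y) : ℝ) - 2 * (wt (P *ᵥ (y + s)) : ℝ)) * (Real.pi / 8)) hsum y
    obtain ⟨j, hj⟩ := exp_real_mul_I_eq_one h1
    refine ⟨j, ?_⟩
    have hpi := Real.pi_ne_zero
    have h2 : (2 * ((wt (P *ᵥ y) : ℕ) : ℝ) - 2 * ((wt (P *ᵥ (y + s)) : ℕ) : ℝ)) * Real.pi
        = (16 * (j:ℝ)) * Real.pi := by
      linear_combination 8 * hj
    have h3 := mul_right_cancel₀ hpi h2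
    have h4 : 2 * (wt (P *ᵥ y) : ℤ) - 2 * (wt (P *ᵥ (y + s)) : ℤ) = 16 * j := by
      exact_mod_cast h3
    omega
  -- Step C : counting identities
  set R : (Fin n → ZMod 2) → ℤ :=
    fun y => ∑ i : Fin k, ((P i ⬝ᵥ y).val : ℤ) * ((P i ⬝ᵥ s).val : ℤ) with hR
  set N : ℤ := ∑ i : Fin k, ((P i ⬝ᵥ s).val : ℤ) with hN
  have hkey : ∀ y : Fin n → ZMod 2,
      (wt (P *ᵥ y) : ℤ) - (wt (P *ᵥ (y + s)) : ℤ) = 2 * R y - N := by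
    intro y
    rw [wt_eq_sum_val, wt_eq_sum_val, ← Finset.sum_sub_distrib]
    have hpt : ∀ i : Fin k, (((P *ᵥ y) i).val : ℤ) - (((P *ᵥ (y + s)) i).val : ℤ)
        = 2 * (((P i ⬝ᵥ y).val : ℤ) * ((P i ⬝ᵥ s).val : ℤ)) - ((P i ⬝ᵥ s).val : ℤ) := by
      intro i
      have e1 : (P *ᵥ y) i = P i ⬝ᵥ y := rfl
      have e2 : (P *ᵥ (y + s)) i = P i ⬝ᵥ y + P i ⬝ᵥ s := by
        rw [Matrix.mulVec_add]; rfl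
      rw [e1, e2, zmod2_val_add]; ring
    rw [Finset.sum_congr rfl fun i _ => hpt i, Finset.sum_sub_distrib, ← Finset.mul_sum, hR, hN]
  have hdvd8 : ∀ y : Fin n → ZMod 2, (8:ℤ) ∣ 2 * R y - N := by
    intro y; rw [← hkey]; exact hdvd y
  have hR0 : R 0 = 0 := by
    simp [hR, dotProduct_zero]
  have hN8 : (8:ℤ) ∣ N := by
    have := hdvd8 0
    rw [hR0] at this
    omega
  have hR4 : ∀ y : Fin n → ZMod 2, (4:ℤ) ∣ R y := by
    intro y
    have := hdvd8 y
    omega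
  have ho : ∀ d e : Fin n → ZMod 2,
      (2:ℤ) ∣ ∑ i : Fin k, ((P i ⬝ᵥ d).val : ℤ) * ((P i ⬝ᵥ e).val : ℤ) * ((P i ⬝ᵥ s).val : ℤ) := by
    intro d e
    have hRde : R (d + e) = R d + R e
        - 2 * ∑ i : Fin k, ((P i ⬝ᵥ d).val : ℤ) * ((P i ⬝ᵥ e).val : ℤ) * ((P i ⬝ᵥ s).val : ℤ) := by
      rw [hR]
      simp only
      have hpt : ∀ i : Fin k, ((P i ⬝ᵥ (d + e)).val : ℤ) * ((P i ⬝ᵥ s).val : ℤ)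
          = ((P i ⬝ᵥ d).val : ℤ) * ((P i ⬝ᵥ s).val : ℤ)
            + ((P i ⬝ᵥ e).val : ℤ) * ((P i ⬝ᵥ s).val : ℤ)
            - 2 * (((P i ⬝ᵥ d).val : ℤ) * ((P i ⬝ᵥ e).val : ℤ) * ((P i ⬝ᵥ s).val : ℤ)) := by
        intro i
        rw [dotProduct_add, zmod2_val_add]
        ring
      rw [Finset.sum_congr rfl fun i _ => hpt i, Finset.sum_sub_distrib,
        Finset.sum_add_distrib, ← Finset.mul_sum]
    have h1 := hR4 d
    have h2 := hR4 e
    have h3 := hR4 (d + e)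
    omega
  -- Step D : the classical condition holds for every pair
  have hval : ∀ t : ZMod 2, ((t.val : ℕ) : ZMod 2) = t := by decide
  have hcond : ∀ de : (Fin n → ZMod 2) × (Fin n → ZMod 2),
      dotProduct
        (∑ i ∈ Finset.univ.filter (fun i : Fin k =>
            dotProduct (P i) de.1 = 1 ∧ dotProduct (P i) de.2 = 1), P i)
        s = 0 := by
    rintro ⟨d, e⟩
    have hsdp : ∀ (F : Finset (Fin k)),
        (∑ i ∈ F, P i) ⬝ᵥ s = ∑ i ∈ F, P i ⬝ᵥ s := by
      intro F
      exact sum_dotProduct F P s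
    rw [hsdp]
    have he : ∑ i ∈ Finset.univ.filter (fun i : Fin k => P i ⬝ᵥ d = 1 ∧ P i ⬝ᵥ e = 1), P i ⬝ᵥ s
        = ((∑ i : Fin k, ((P i ⬝ᵥ d).val : ℤ) * ((P i ⬝ᵥ e).val : ℤ) * ((P i ⬝ᵥ s).val : ℤ) : ℤ)
            : ZMod 2) := by
      push_cast [hval]
      rw [Finset.sum_filter]
      refine Finset.sum_congr rfl fun i _ => ?_
      rcases zmod2_cases (P i ⬝ᵥ d) with h1 | h1 <;> rcases zmod2_cases (P i ⬝ᵥ e) with h2 | h2 <;>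
        simp [h1, h2]
    rw [he, ZMod.intCast_zmod_eq_zero_iff_dvd]
    exact_mod_cast ho d e
  rw [Finset.filter_true_of_mem (fun de _ => hcond de), Finset.card_univ, Fintype.card_prod,
    hcard]
  push_cast
  rw [div_eq_one_iff_eq (by positivity)]
  ring
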